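/- In the algebra B of the two-parameter calculus, the elements π̂_θ = ∂θ, π̂_φ = ∂φ + (h'/2)∂θ and θ̂ = θ + (h/2)φ, φ̂ = φ also satisfy π̂_θ θ̂ = 1 − θ̂ π̂_θ + h φ̂ π̂_θ, π̂_θ φ̂ = −φ̂ π̂_θ, and π̂_φ φ̂ = 1 − φ̂ π̂_φ + h' φ̂ π̂_θ. -/
import Mathlib


theorem pi_hat_remaining_relations (B : Type*) [Ring B] [Algebra ℂ B] (h h' : ℂ)
    (θ φ Dθ Dφ : B)
    (q1 : θ * θ = h • (θ * φ)) (q2 : φ * φ = 0) (q3 : θ * φ + φ * θ = 0)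
    (d1 : Dθ * Dθ = 0) (d2 : Dφ * Dφ = h' • (Dθ * Dφ))
    (d3 : Dθ * Dφ + Dφ * Dθ = 0)
    (c1 : Dθ * θ = 1 - θ * Dθ + h • (φ * Dθ))
    (c2 : Dθ * φ = -(φ * Dθ))
    (c3 : Dφ * θ = -(θ * Dφ) - h • (θ * Dθ) - h' • (φ * Dφ) - (h * h') • (φ * Dθ))
    (c4 : Dφ * φ = 1 - φ * Dφ + h' • (φ * Dθ)) :
    let θh : B := θ + (h / 2) • φ
    let φh : B := φ
    let πθ : B := Dθ
    let πφ : B := Dφ + (h' / 2) • Dθ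
    πθ * θh = 1 - θh * πθ + h • (φh * πθ) ∧
    πθ * φh = -(φh * πθ) ∧
    πφ * φh = 1 - φh * πφ + h' • (φh * πθ) := by
  refine ⟨?_, ?_, ?_⟩ <;>
    simp only [mul_add, add_mul, smul_mul_assoc, mul_smul_comm, c1, c2, c4] <;> module
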